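/- Disjointification lemma: Let w be a weight on Γ, and A, B ⊆ ℓ^{p,∞}(Γ,w) with |A| > max(|B|, ℵ_0). Suppose there exist K < ∞ and r > 1 with ‖∑_{x∈F} ε_x x‖ ≤ K|F|^{1/r} for all finite F ⊆ A and signs ε_x = ±1. Then there exists C ⊆ A with |C| = |A| such that the elements of C are pairwise disjoint, and |b| ∧ |c| = 0 for all b ∈ B, c ∈ C. -/
import Mathlib


open ENNReal

/-- The weak `ℓ^p` quasi-norm on a weighted set. -/
noncomputable def weakNorm {Γ : Type*} (p : ℝ) (w : Γ → ℝ) (x : Γ → ℝ) : ℝ≥0∞ :=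
  ⨆ (c : ℝ) (_ : 0 < c),
    ENNReal.ofReal c * (∑' γ : {γ : Γ // c < |x γ|}, ENNReal.ofReal (w γ.1)) ^ ((1 : ℝ)/p)

section Helpers

variable {Γ : Type*}

lemma weakNorm_term_le (p : ℝ) (w : Γ → ℝ) (y : Γ → ℝ) {c : ℝ} (hc : 0 < c) :
    ENNReal.ofReal c * (∑' γ : {γ : Γ // c < |y γ|}, ENNReal.ofReal (w γ.1)) ^ ((1 : ℝ)/p)
      ≤ weakNorm p w y :=
  le_iSup₂ (f := fun (c : ℝ) (_ : 0 < c) =>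
    ENNReal.ofReal c * (∑' γ : {γ : Γ // c < |y γ|}, ENNReal.ofReal (w γ.1)) ^ ((1 : ℝ)/p)) c hc

lemma weakNorm_lower (p : ℝ) (hp : 0 < p) (w : Γ → ℝ) (y : Γ → ℝ) {c : ℝ}
    (hc : 0 < c) (γ : Γ) (hγ : c < |y γ|) :
    ENNReal.ofReal c * (ENNReal.ofReal (w γ)) ^ ((1 : ℝ)/p) ≤ weakNorm p w y := by
  refine le_trans ?_ (weakNorm_term_le p w y hc)
  gcongr
  exact ENNReal.le_tsum (⟨γ, hγ⟩ : {γ : Γ // c < |y γ|})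

lemma countable_support_of_weakNorm_ne_top {p : ℝ} (hp : 0 < p) {w : Γ → ℝ}
    (hw : ∀ γ, 0 < w γ) {x : Γ → ℝ} (hx : weakNorm p w x ≠ ⊤) :
    {γ | x γ ≠ 0}.Countable := by
  have key : ∀ c : ℝ, 0 < c → {γ | c < |x γ|}.Countable := by
    intro c hc
    have hterm := weakNorm_term_le p w x hc
    have htsum : (∑' γ : {γ : Γ // c < |x γ|}, ENNReal.ofReal (w γ.1)) ≠ ⊤ := by
      intro h
      rw [h, ENNReal.top_rpow_of_pos (by positivity), ENNReal.mul_top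
        (by simpa [ENNReal.ofReal_eq_zero] using hc.not_ge)] at hterm
      exact hx (top_le_iff.mp hterm)
    have hcnt := Summable.countable_support_ennreal htsum
    have hsupp : (Function.support fun γ : {γ : Γ // c < |x γ|} => ENNReal.ofReal (w γ.1))
        = Set.univ := by
      ext γ; simp [Function.support, ENNReal.ofReal_eq_zero, hw γ.1]
    rw [hsupp, Set.countable_univ_iff] at hcnt
    exact Set.countable_coe_iff.mp hcnt
  have : {γ | x γ ≠ 0} = ⋃ n : ℕ, {γ | 1 / (n + 1) < |x γ|} := by
    ext γ
    simp only [Set.mem_setOf_eq, Set.mem_iUnion]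
    constructor
    · intro h
      obtain ⟨n, hn⟩ := exists_nat_one_div_lt (abs_pos.mpr h)
      exact ⟨n, by exact_mod_cast hn⟩
    · rintro ⟨n, hn⟩
      intro h0
      rw [h0, abs_zero] at hn
      exact absurd hn (by positivity : (0:ℝ) < 1/((n:ℝ)+1)).not_gt
  rw [this]
  exact Set.countable_iUnion fun n => key _ (by positivity)

lemma fiber_finite (p : ℝ) (hp : 0 < p) (w : Γ → ℝ) (hw : ∀ γ, 0 < w γ)
    (A : Set (Γ → ℝ)) (K r : ℝ) (hr : 1 < r)
    (hbound : ∀ F : Finset (Γ → ℝ), ↑F ⊆ A → ∀ ε : (Γ → ℝ) → ℝ,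
      (∀ x ∈ F, ε x = 1 ∨ ε x = -1) →
      weakNorm p w (∑ x ∈ F, ε x • x) ≤ ENNReal.ofReal (K * (F.card : ℝ) ^ ((1 : ℝ)/r)))
    (γ : Γ) {c : ℝ} (hc : 0 < c) : {x ∈ A | c < |x γ|}.Finite := by
  by_contra hinf
  replace hinf : {x | x ∈ A ∧ c < |x γ|}.Infinite := hinf
  set a : ℝ := c * (w γ) ^ ((1:ℝ)/p) with ha_def
  have ha : 0 < a := by
    have := hw γ
    positivity
  set s : ℝ := 1 - 1/r with hs_def
  have hs : 0 < s := by
    have : 1/r < 1 := by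
      rw [div_lt_one (by linarith)]; linarith
    simp only [hs_def]; linarith
  obtain ⟨n0, hn0⟩ := exists_nat_gt ((max (K/a) 0) ^ (1/s))
  set n : ℕ := n0 + 1 with hn_def
  have hnpos : (0:ℝ) < (n:ℝ) := by positivity
  obtain ⟨F, hFsub, hFcard⟩ := hinf.exists_subset_card_eq n
  have hFA : ↑F ⊆ A := fun x hx => (hFsub hx).1
  set ε : (Γ → ℝ) → ℝ := fun x => if 0 ≤ x γ then (1:ℝ) else -1 with hε_def
  have hε : ∀ x ∈ F, ε x = 1 ∨ ε x = -1 := by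
    intro x _; by_cases h : 0 ≤ x γ <;> simp [hε_def, h]
  set y : Γ → ℝ := ∑ x ∈ F, ε x • x with hy_def
  have hyγ : y γ = ∑ x ∈ F, |x γ| := by
    rw [hy_def, Finset.sum_apply]
    refine Finset.sum_congr rfl fun x _ => ?_
    by_cases h : 0 ≤ x γ
    · simp [hε_def, h, abs_of_nonneg h]
    · push_neg at h
      simp [hε_def, h.not_ge, abs_of_neg h]
  have hsum_gt : (n:ℝ) * c < y γ := by
    rw [hyγ]
    have hne : F.Nonempty := Finset.card_pos.mp (by rw [hFcard]; omega)
    calc (n:ℝ) * c = ∑ _x ∈ F, c := by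
          rw [Finset.sum_const, hFcard]; push_cast [hn_def]; ring
    _ < ∑ x ∈ F, |x γ| := Finset.sum_lt_sum_of_nonempty hne fun x hx => (hFsub hx).2
  have hyabs : (n:ℝ) * c < |y γ| := hsum_gt.trans_le (le_abs_self _)
  have h1 := weakNorm_lower p hp w y (by positivity : (0:ℝ) < (n:ℝ)*c) γ hyabs
  have h2 := hbound F hFA ε hε
  rw [hFcard] at h2
  have h3 : ENNReal.ofReal ((n:ℝ) * c * (w γ) ^ ((1:ℝ)/p)) ≤
      ENNReal.ofReal (K * (n:ℝ) ^ ((1:ℝ)/r)) := by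
    calc ENNReal.ofReal ((n:ℝ) * c * (w γ) ^ ((1:ℝ)/p))
        = ENNReal.ofReal ((n:ℝ)*c) * (ENNReal.ofReal (w γ)) ^ ((1:ℝ)/p) := by
          rw [ENNReal.ofReal_rpow_of_pos (hw γ), ← ENNReal.ofReal_mul (by positivity)]
      _ ≤ weakNorm p w y := h1
      _ ≤ _ := h2
  have h4 : (n:ℝ) * a ≤ K * (n:ℝ) ^ ((1:ℝ)/r) := by
    rcases (ENNReal.ofReal_le_ofReal_iff').mp h3 with h | h
    · calc (n:ℝ) * a = (n:ℝ) * c * (w γ) ^ ((1:ℝ)/p) := by rw [ha_def]; ring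
        _ ≤ _ := h
    · exfalso
      have : 0 < (n:ℝ) * c * (w γ) ^ ((1:ℝ)/p) := by
        have := hw γ; positivity
      linarith
  have hmax : (0:ℝ) ≤ max (K/a) 0 := le_max_right _ _
  have hbase : (0:ℝ) ≤ (max (K/a) 0) ^ (1/s) := Real.rpow_nonneg hmax _
  have hlt : max (K/a) 0 < (n:ℝ) ^ s := by
    have h5 : ((max (K/a) 0) ^ (1/s)) ^ s < (n:ℝ) ^ s := by
      apply Real.rpow_lt_rpow hbase _ hs
      calc ((max (K/a) 0) ^ (1/s)) < (n0:ℝ) := hn0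
        _ ≤ (n:ℝ) := by exact_mod_cast Nat.le_succ n0
    rwa [← Real.rpow_mul hmax, one_div_mul_cancel hs.ne', Real.rpow_one] at h5
  have hKa : K / a < (n:ℝ) ^ s := lt_of_le_of_lt (le_max_left _ _) hlt
  have hK : K < a * (n:ℝ) ^ s := by
    rw [div_lt_iff₀ ha] at hKa; linarith [hKa]
  have h6 : K * (n:ℝ) ^ ((1:ℝ)/r) < a * (n:ℝ) ^ s * (n:ℝ) ^ ((1:ℝ)/r) :=
    mul_lt_mul_of_pos_right hK (Real.rpow_pos_of_pos hnpos _)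
  have h7 : a * (n:ℝ) ^ s * (n:ℝ) ^ ((1:ℝ)/r) = (n:ℝ) * a := by
    rw [mul_assoc, ← Real.rpow_add hnpos]
    have : s + 1/r = 1 := by rw [hs_def]; ring
    rw [this, Real.rpow_one]; ring
  rw [h7] at h6
  linarith

lemma mk_biUnion_le_aleph0 {α ι : Type u} (s : Set ι) (f : ι → Set α)
    (h : ∀ i ∈ s, (f i).Countable) :
    Cardinal.mk (⋃ i ∈ s, f i) ≤ Cardinal.mk s * Cardinal.aleph0 := by
  refine (Cardinal.mk_biUnion_le f s).trans ?_
  refine mul_le_mul' le_rfl (ciSup_le' fun i => ?_)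
  exact Cardinal.mk_le_aleph0_iff.mpr (Set.countable_coe_iff.mpr (h i.1 i.2))

end Helpers

/-- Disjointification lemma: if `A, B ⊆ ℓ^{p,∞}(Γ,w)` with `|A| > max(|B|, ℵ₀)` and signed
sums over finite subsets of `A` are bounded by `K |F|^{1/r}` with `r > 1`, then there is
`C ⊆ A` with `|C| = |A|` consisting of pairwise disjoint elements, each disjoint from every
element of `B`. -/
theorem disjointification_lemma {Γ : Type*} (p : ℝ) (hp : 1 < p)
    (w : Γ → ℝ) (hw : ∀ γ, 0 < w γ)
    (A B : Set (Γ → ℝ))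
    (hA : ∀ x ∈ A, weakNorm p w x ≠ ⊤) (hB : ∀ x ∈ B, weakNorm p w x ≠ ⊤)
    (hcard : max (Cardinal.mk B) Cardinal.aleph0 < Cardinal.mk A)
    (K r : ℝ) (hr : 1 < r)
    (hbound : ∀ F : Finset (Γ → ℝ), ↑F ⊆ A → ∀ ε : (Γ → ℝ) → ℝ,
      (∀ x ∈ F, ε x = 1 ∨ ε x = -1) →
      weakNorm p w (∑ x ∈ F, ε x • x) ≤ ENNReal.ofReal (K * (F.card : ℝ) ^ ((1 : ℝ)/r))) :
    ∃ C ⊆ A, Cardinal.mk C = Cardinal.mk A ∧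
      (∀ x ∈ C, ∀ y ∈ C, x ≠ y → ∀ γ, x γ = 0 ∨ y γ = 0) ∧
      (∀ b ∈ B, ∀ c ∈ C, ∀ γ, b γ = 0 ∨ c γ = 0) := by
  classical
  have hp0 : (0:ℝ) < p := by linarith
  -- each "fiber" {x ∈ A | x γ ≠ 0} is countable
  have hfiber : ∀ γ : Γ, {x | x ∈ A ∧ x γ ≠ 0}.Countable := by
    intro γ
    have heq : {x | x ∈ A ∧ x γ ≠ 0} = ⋃ n : ℕ, {x | x ∈ A ∧ 1/((n:ℝ)+1) < |x γ|} := by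
      ext x
      simp only [Set.mem_setOf_eq, Set.mem_iUnion]
      constructor
      · rintro ⟨hxA, hx⟩
        obtain ⟨n, hn⟩ := exists_nat_one_div_lt (abs_pos.mpr hx)
        exact ⟨n, hxA, by exact_mod_cast hn⟩
      · rintro ⟨n, hxA, hn⟩
        refine ⟨hxA, fun h0 => ?_⟩
        rw [h0, abs_zero] at hn
        exact absurd hn (by positivity : (0:ℝ) < 1/((n:ℝ)+1)).not_gt
    rw [heq]
    exact Set.countable_iUnion fun n =>
      (fiber_finite p hp0 w hw A K r hr hbound γ (by positivity)).countable
  -- Zorn's lemma on families of pairwise disjoint elements, disjoint from B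
  set 𝒮 : Set (Set (Γ → ℝ)) := {C | C ⊆ A ∧
    (∀ x ∈ C, ∀ y ∈ C, x ≠ y → ∀ γ, x γ = 0 ∨ y γ = 0) ∧
    (∀ b ∈ B, ∀ c ∈ C, ∀ γ, b γ = 0 ∨ c γ = 0)} with h𝒮
  obtain ⟨C, hCmem, hCmax⟩ : ∃ C, Maximal (· ∈ 𝒮) C := by
    apply zorn_subset
    intro ch hch hchain
    refine ⟨⋃₀ ch, ⟨?_, ?_, ?_⟩, fun s hs => Set.subset_sUnion_of_mem hs⟩
    · exact Set.sUnion_subset fun s hs => (hch hs).1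
    · rintro x hx y hy hxy γ
      obtain ⟨Cx, hCx, hxCx⟩ := hx
      obtain ⟨Cy, hCy, hyCy⟩ := hy
      rcases hchain.total hCx hCy with h | h
      · exact (hch hCy).2.1 x (h hxCx) y hyCy hxy γ
      · exact (hch hCx).2.1 x hxCx y (h hyCy) hxy γ
    · rintro b hb c hc γ
      obtain ⟨Cc, hCc, hcCc⟩ := hc
      exact (hch hCc).2.2 b hb c hcCc γ
  obtain ⟨hCA, hCdisj, hCB⟩ := hCmem
  refine ⟨C, hCA, ?_, hCdisj, hCB⟩
  -- remains: |C| = |A|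
  by_contra hne
  have hClt : Cardinal.mk C < Cardinal.mk A :=
    lt_of_le_of_ne (Cardinal.mk_le_mk_of_subset hCA) hne
  have haleph : Cardinal.aleph0 ≤ Cardinal.mk A :=
    le_of_lt (lt_of_le_of_lt (le_max_right _ _) hcard)
  have haleph' : Cardinal.aleph0 < Cardinal.mk A := lt_of_le_of_lt (le_max_right _ _) hcard
  have hBlt : Cardinal.mk B < Cardinal.mk A := lt_of_le_of_lt (le_max_left _ _) hcard
  -- the set of coordinates used by C and B
  set S : Set Γ := (⋃ x ∈ C, {γ | x γ ≠ 0}) ∪ ⋃ b ∈ B, {γ | b γ ≠ 0} with hS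
  have hSlt : Cardinal.mk S < Cardinal.mk A := by
    refine lt_of_le_of_lt (Cardinal.mk_union_le _ _) ?_
    apply Cardinal.add_lt_of_lt haleph
    · refine lt_of_le_of_lt (mk_biUnion_le_aleph0 C _ fun x hx =>
        countable_support_of_weakNorm_ne_top hp0 hw (hA x (hCA hx))) ?_
      exact Cardinal.mul_lt_of_lt haleph hClt haleph'
    · refine lt_of_le_of_lt (mk_biUnion_le_aleph0 B _ fun b hb =>
        countable_support_of_weakNorm_ne_top hp0 hw (hB b hb)) ?_
      exact Cardinal.mul_lt_of_lt haleph hBlt haleph'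
  -- the set of elements of A touching S
  set D : Set (Γ → ℝ) := {x | x ∈ A ∧ ∃ γ ∈ S, x γ ≠ 0} with hD
  have hDsub : D ⊆ ⋃ γ ∈ S, {x | x ∈ A ∧ x γ ≠ 0} := by
    rintro x ⟨hxA, γ, hγ, hxγ⟩
    exact Set.mem_biUnion hγ ⟨hxA, hxγ⟩
  have hDlt : Cardinal.mk D < Cardinal.mk A := by
    refine lt_of_le_of_lt (Cardinal.mk_le_mk_of_subset hDsub) ?_
    refine lt_of_le_of_lt (mk_biUnion_le_aleph0 S _ fun γ _ => hfiber γ) ?_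
    exact Cardinal.mul_lt_of_lt haleph hSlt haleph'
  have hCDlt : Cardinal.mk (C ∪ D : Set (Γ → ℝ)) < Cardinal.mk A :=
    lt_of_le_of_lt (Cardinal.mk_union_le _ _) (Cardinal.add_lt_of_lt haleph hClt hDlt)
  -- pick a fresh element of A
  have hex : ∃ x, x ∈ A ∧ x ∉ C ∪ D := by
    by_contra h
    push_neg at h
    exact absurd (Cardinal.mk_le_mk_of_subset fun x hx => h x hx) hCDlt.not_ge
  obtain ⟨x, hxA, hxnew⟩ := hex
  have hxC : x ∉ C := fun h => hxnew (Or.inl h)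
  have hxD : x ∉ D := fun h => hxnew (Or.inr h)
  have hxS : ∀ γ, x γ ≠ 0 → γ ∉ S := by
    intro γ hγ hγS
    exact hxD ⟨hxA, γ, hγS, hγ⟩
  -- x is disjoint from every element of C
  have hxdisjC : ∀ c ∈ C, ∀ γ, x γ = 0 ∨ c γ = 0 := by
    intro c hc γ
    by_cases hxγ : x γ = 0
    · exact Or.inl hxγ
    · refine Or.inr (by_contra fun hcγ => ?_)
      exact hxS γ hxγ (Or.inl (Set.mem_biUnion hc hcγ))
  have hxdisjB : ∀ b ∈ B, ∀ γ, b γ = 0 ∨ x γ = 0 := by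
    intro b hb γ
    by_cases hxγ : x γ = 0
    · exact Or.inr hxγ
    · refine Or.inl (by_contra fun hbγ => ?_)
      exact hxS γ hxγ (Or.inr (Set.mem_biUnion hb hbγ))
  -- insert x C is in 𝒮, contradicting maximality
  have hins : insert x C ∈ 𝒮 := by
    refine ⟨Set.insert_subset hxA hCA, ?_, ?_⟩
    · rintro u (rfl | hu) v (rfl | hv) huv γ
      · exact absurd rfl huv
      · exact hxdisjC v hv γ
      · rcases hxdisjC u hu γ with h | h
        · exact Or.inr h
        · exact Or.inl h
      · exact hCdisj u hu v hv huv γ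
    · rintro b hb c (rfl | hc) γ
      · exact hxdisjB b hb γ
      · exact hCB b hb c hc γ
  exact hxC (hCmax hins (Set.subset_insert x C) (Set.mem_insert x C))
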